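/- Let (V,w) be an additively separable hedonic game, let π be a Nash stable partition of V, and suppose there is an assignment of colors from {1,…,k} to the parts of π such that any two distinct parts P, P' containing vertices u ∈ P, v ∈ P' which are adjacent or have a common neighbor in the underlying graph (i.e., are at distance at most 2) receive distinct colors. Then the vertex coloring c : V → {1,…,k} assigning to each vertex the color of its part is a Stable k-Coloring of the game. -/

import Mathlib

/-- A partition of the finite vertex set `V`, represented by the function sending each
vertex to its part. -/
structure ASHGPart (V : Type*) [DecidableEq V] where
  part : V → Finset V
  mem_part : ∀ v, v ∈ part v
  eq_of_mem : ∀ u v, u ∈ part v → part u = part v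

/-- The utility of vertex `v` in coalition `S`: the sum of `w v u` over `u ∈ S`, `u ≠ v`. -/
def util {V : Type*} [DecidableEq V] (w : V → V → ℤ) (v : V) (S : Finset V) : ℤ :=
  ∑ u ∈ S.erase v, w v u

/-- A partition is Nash stable if every vertex has nonnegative utility in its own part and
does not prefer any other part of the partition. -/
def NashStable {V : Type*} [DecidableEq V] (w : V → V → ℤ) (π : ASHGPart V) : Prop :=
  ∀ v : V, 0 ≤ util w v (π.part v) ∧ ∀ x : V, util w v (π.part x) ≤ util w v (π.part v)

/-- A stable `k`-coloring of the game. -/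
def StableColoring {V : Type*} [Fintype V] [DecidableEq V] (w : V → V → ℤ) {k : ℕ}
    (c : V → Fin k) : Prop :=
  ∀ v : V,
    0 ≤ ∑ u ∈ Finset.univ.filter (fun u => u ≠ v ∧ c u = c v), w v u ∧
    ∀ j : Fin k,
      ∑ u ∈ Finset.univ.filter (fun u => u ≠ v ∧ c u = j), w v u ≤
      ∑ u ∈ Finset.univ.filter (fun u => u ≠ v ∧ c u = c v), w v u


/-- The underlying (undirected simple) graph of the game: distinct `u, v` are adjacent
iff `w u v ≠ 0` or `w v u ≠ 0`. -/
def underlying {V : Type*} (w : V → V → ℤ) : SimpleGraph V where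
  Adj u v := u ≠ v ∧ (w u v ≠ 0 ∨ w v u ≠ 0)
  symm := ⟨fun u v h => ⟨h.1.symm, h.2.symm⟩⟩
  loopless := ⟨fun v h => h.1 rfl⟩

theorem stmt_1 {V : Type*} [Fintype V] [DecidableEq V] (w : V → V → ℤ)
    (hw : ∀ v, w v v = 0) (π : ASHGPart V) (hπ : NashStable w π)
    (k : ℕ) (c : V → Fin k)
    (hconst : ∀ u v : V, π.part u = π.part v → c u = c v)
    (hproper : ∀ u v : V, π.part u ≠ π.part v →
      ((underlying w).Adj u v ∨ ∃ z, (underlying w).Adj u z ∧ (underlying w).Adj z v) →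
      c u ≠ c v) :
    StableColoring w c := by
  intro v
  have key : util w v (π.part v)
      = ∑ u ∈ Finset.univ.filter (fun u => u ≠ v ∧ c u = c v), w v u := by
    apply Finset.sum_subset
    · intro u hu
      rcases Finset.mem_erase.mp hu with ⟨hne, hmem⟩
      simp only [Finset.mem_filter, Finset.mem_univ, true_and]
      exact ⟨hne, hconst u v (π.eq_of_mem u v hmem)⟩
    · intro u hu hnot
      simp only [Finset.mem_filter, Finset.mem_univ, true_and] at hu
      by_contra hne0
      have hup : π.part v ≠ π.part u := by
        intro heq
        exact hnot (Finset.mem_erase.mpr ⟨hu.1, heq ▸ π.mem_part u⟩)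
      exact hproper v u hup (Or.inl ⟨hu.1.symm, Or.inl hne0⟩) hu.2.symm
  constructor
  · rw [← key]; exact (hπ v).1
  · intro j
    rw [← key]
    by_cases hjv : j = c v
    · subst hjv; rw [key]
    by_cases hx : ∃ x, x ≠ v ∧ c x = j ∧ w v x ≠ 0
    · obtain ⟨x, hxv, hcx, hwx⟩ := hx
      have hsum : ∑ u ∈ Finset.univ.filter (fun u => u ≠ v ∧ c u = j), w v u
          = util w v (π.part x) := by
        symm
        apply Finset.sum_subset
        · intro u hu
          rcases Finset.mem_erase.mp hu with ⟨hne, hmem⟩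
          simp only [Finset.mem_filter, Finset.mem_univ, true_and]
          exact ⟨hne, (hconst u x (π.eq_of_mem u x hmem)).trans hcx⟩
        · intro u hu hnot
          simp only [Finset.mem_filter, Finset.mem_univ, true_and] at hu
          by_contra hne0
          have hup : π.part u ≠ π.part x := by
            intro heq
            exact hnot (Finset.mem_erase.mpr ⟨hu.1, heq ▸ π.mem_part u⟩)
          exact hproper u x hup
            (Or.inr ⟨v, ⟨hu.1, Or.inr hne0⟩, ⟨hxv.symm, Or.inl hwx⟩⟩)
            (hu.2.trans hcx.symm)
      rw [hsum]
      exact (hπ v).2 x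
    · push_neg at hx
      have hz : ∑ u ∈ Finset.univ.filter (fun u => u ≠ v ∧ c u = j), w v u = 0 := by
        apply Finset.sum_eq_zero
        intro u hu
        simp only [Finset.mem_filter, Finset.mem_univ, true_and] at hu
        by_contra hne0
        exact hne0 (hx u hu.1 hu.2)
      rw [hz]
      exact (hπ v).1
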